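/- Let C_1 and C_2 be cycles in the full grid graph G. Suppose D and D' are two cycles, each consisting only of edges of C_1 and C_2, such that every edge of C_1 and every edge of C_2 either belongs to D or is contained in the interior of D, and likewise every edge of C_1 and every edge of C_2 either belongs to D' or is contained in the interior of D'. Then D = D'. -/

import Mathlib

/-!
Common framework: tile ℝ² into closed unit squares indexed by `ℤ²`, with corners
forming a translate of `ℤ²` and the origin the centre of the square `S₀` (index `(0,0)`).
A cycle is identified with its edge set (a set of unordered pairs of corners);
its interior (resp. exterior) is the union of the bounded (resp. unbounded)
connected components of the complement of the closed curve it traces in the plane.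
-/

/-- Corners of the grid squares, indexed by `ℤ²`. -/
abbrev GridV := ℤ × ℤ

/-- Embedding of corners into the plane: the square of index `z` is
`[z₁ - 1/2, z₁ + 1/2] × [z₂ - 1/2, z₂ + 1/2]`, so the origin is the centre of `S₀`. -/
noncomputable def toPlane (v : GridV) : ℝ × ℝ := ((v.1 : ℝ) - 1 / 2, (v.2 : ℝ) - 1 / 2)

/-- The closed unit square of index `z`. -/
def squareSet (z : GridV) : Set (ℝ × ℝ) :=
  Set.Icc ((z.1 : ℝ) - 1 / 2, (z.2 : ℝ) - 1 / 2) ((z.1 : ℝ) + 1 / 2, (z.2 : ℝ) + 1 / 2)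

/-- The four edges (unit segments) of the square of index `z`, as unordered pairs of corners. -/
def squareEdges (z : GridV) : Set (Sym2 GridV) :=
  {s(z, z + (1, 0)), s(z + (1, 0), z + (1, 1)), s(z + (1, 1), z + (0, 1)), s(z + (0, 1), z)}

/-- Adjacency of corners in the full grid graph `G`: Euclidean distance one. -/
def GridAdj (u v : GridV) : Prop := |u.1 - v.1| + |u.2 - v.2| = 1

/-- A cycle in the full grid graph: a cyclic sequence `(v₀, …, v_{n-1}, v₀)` of
distinct corners with consecutive corners adjacent. -/
structure GridCycle where
  n : ℕ
  hn : 3 ≤ n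
  f : ZMod n → GridV
  inj : Function.Injective f
  adj : ∀ i, GridAdj (f i) (f (i + 1))

/-- The edge set of a grid cycle. -/
def GridCycle.edgeSet (C : GridCycle) : Set (Sym2 GridV) :=
  {e | ∃ i : ZMod C.n, e = s(C.f i, C.f (i + 1))}

/-- An edge set is (the edge set of) a cycle of the grid graph `G`.
We identify a cycle with its edge set. -/
def IsCycle (E : Set (Sym2 GridV)) : Prop := ∃ C : GridCycle, C.edgeSet = E

/-- A cycle of the subgraph of the grid graph with edge set `G`. -/
def IsCycleIn (G E : Set (Sym2 GridV)) : Prop := IsCycle E ∧ E ⊆ G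

/-- The vertices incident to some edge of `E`. -/
def vertexSetOf (E : Set (Sym2 GridV)) : Set GridV := {v | ∃ e ∈ E, v ∈ e}

/-- The closed segment in the plane realizing an edge. -/
noncomputable def edgeSeg : Sym2 GridV → Set (ℝ × ℝ) :=
  Sym2.lift ⟨fun a b => segment ℝ (toPlane a) (toPlane b), fun _ _ => segment_symm ℝ _ _⟩

/-- The closed curve in the plane traced by the edges of `E`. -/
noncomputable def carrierOf (E : Set (Sym2 GridV)) : Set (ℝ × ℝ) := ⋃ e ∈ E, edgeSeg e

/-- The interior of a cycle: the union of the bounded connected components of the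
complement of its carrier curve. -/
noncomputable def interiorOf (E : Set (Sym2 GridV)) : Set (ℝ × ℝ) :=
  {p | p ∉ carrierOf E ∧ Bornology.IsBounded (connectedComponentIn (carrierOf E)ᶜ p)}

/-- The exterior of a cycle: the union of the unbounded connected components of the
complement of its carrier curve. -/
noncomputable def exteriorOf (E : Set (Sym2 GridV)) : Set (ℝ × ℝ) :=
  {p | p ∉ carrierOf E ∧ ¬ Bornology.IsBounded (connectedComponentIn (carrierOf E)ᶜ p)}

/-- The set `A` is contained in the interior of the cycle `E` (points of the
curve itself being allowed, so that e.g. a square whose boundary edges lie on the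
cycle counts as contained in the interior). -/
def inInterior (E : Set (Sym2 GridV)) (A : Set (ℝ × ℝ)) : Prop :=
  A ⊆ interiorOf E ∪ carrierOf E

/-- The set `A` lies in the exterior of the cycle `E` (points of the curve itself
being allowed). -/
def inExterior (E : Set (Sym2 GridV)) (A : Set (ℝ × ℝ)) : Prop :=
  A ⊆ exteriorOf E ∪ carrierOf E

/-- Star adjacency: distinct squares sharing at least a corner. -/
def starAdj (z w : GridV) : Prop := z ≠ w ∧ |z.1 - w.1| ≤ 1 ∧ |z.2 - w.2| ≤ 1

/-- Plus adjacency: squares sharing an edge. -/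
def plusAdj (z w : GridV) : Prop := |z.1 - w.1| + |z.2 - w.2| = 1

/-- The star-connected occupied component `C(0)` of the square `S₀` (of index `(0,0)`),
for the occupancy configuration `ω`; empty if `S₀` is vacant. -/
def starComp (ω : GridV → Prop) : Set GridV :=
  {z | ω z ∧ Relation.ReflTransGen (fun a b => ω a ∧ ω b ∧ starAdj a b) (0, 0) z}

/-- The plus-connected occupied component `C⁺(0)` of the square `S₀`. -/
def plusComp (ω : GridV → Prop) : Set GridV :=
  {z | ω z ∧ Relation.ReflTransGen (fun a b => ω a ∧ ω b ∧ plusAdj a b) (0, 0) z}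

/-- The edge set of the graph `G_C`: all edges of squares of `C(0)`. -/
def gcEdges (ω : GridV → Prop) : Set (Sym2 GridV) := ⋃ z ∈ starComp ω, squareEdges z

/-- The edge set of the graph `G⁺_C`: all edges of squares of `C⁺(0)`. -/
def gpcEdges (ω : GridV → Prop) : Set (Sym2 GridV) := ⋃ z ∈ plusComp ω, squareEdges z

/-- `e` is an outermost boundary edge of the graph with edge set `G`: for every
cycle `E` in this graph, either `e` is an edge of `E` or `e` lies in the exterior of `E`. -/
def outermostBoundaryEdgeIn (G : Set (Sym2 GridV)) (e : Sym2 GridV) : Prop :=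
  e ∈ G ∧ ∀ E, IsCycleIn G E → e ∈ E ∨ inExterior E (edgeSeg e)

/-- The subgraph spanned by the edge set `E` is connected: any two incident vertices
are joined by a walk using only edges of `E`. -/
def EdgeSetConnected (E : Set (Sym2 GridV)) : Prop :=
  ∀ u v, u ∈ vertexSetOf E → v ∈ vertexSetOf E →
    ∃ p : List GridV, p.head? = some u ∧ p.getLast? = some v ∧
      List.Chain' (fun a b => s(a, b) ∈ E) p

/-- `D` is the outermost boundary cycle `D_k` of the square of index `z` of the star
component `C(0)`: (a) the square lies in the interior of `D`; (b) every edge of `D` is a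
boundary edge adjacent to an occupied square of `C(0)` in the interior of `D` and to a
vacant square in the exterior of `D`; (c) every cycle of `G_C` containing the square in
its interior has all its edges on `D` or in the interior of `D`. -/
def isOutermostCycleOf (ω : GridV → Prop) (z : GridV) (D : Set (Sym2 GridV)) : Prop :=
  IsCycleIn (gcEdges ω) D ∧
  inInterior D (squareSet z) ∧
  (∀ e ∈ D,
    (∃ w ∈ starComp ω, e ∈ squareEdges w ∧ inInterior D (squareSet w)) ∧
    (∃ w, ¬ ω w ∧ e ∈ squareEdges w ∧ inExterior D (squareSet w))) ∧
  (∀ C, IsCycleIn (gcEdges ω) C → inInterior C (squareSet z) →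
    ∀ e ∈ C, e ∈ D ∨ inInterior D (edgeSeg e))

/-- The list of edges traversed by a walk given as a list of vertices. -/
def walkEdges (p : List GridV) : List (Sym2 GridV) :=
  List.zipWith (fun a b => s(a, b)) p p.tail
/-- Canonical horizontal edge. -/
abbrev Hedge (k h : ℤ) : Sym2 GridV := s(((k, h) : GridV), ((k + 1, h) : GridV))
/-- Canonical vertical edge. -/
abbrev Vedge (k h : ℤ) : Sym2 GridV := s(((k, h) : GridV), ((k, h + 1) : GridV))
/-- Top edge of square `z`. -/
abbrev topE (z : GridV) : Sym2 GridV := Hedge z.1 (z.2 + 1)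
/-- Right edge of square `z`. -/
abbrev rightE (z : GridV) : Sym2 GridV := Vedge (z.1 + 1) z.2
/-- Center of square `z`. -/
noncomputable abbrev ctr (z : GridV) : ℝ × ℝ := ((z.1 : ℝ), (z.2 : ℝ))

lemma Hedge_inj {k h k' h' : ℤ} (hE : Hedge k h = Hedge k' h') : k = k' ∧ h = h' := by
  rw [Sym2.eq_iff] at hE
  rcases hE with ⟨h1, h2⟩ | ⟨h1, h2⟩ <;>
    simp only [Prod.mk.injEq] at h1 h2 <;> omega

lemma Vedge_inj {k h k' h' : ℤ} (hE : Vedge k h = Vedge k' h') : k = k' ∧ h = h' := by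
  rw [Sym2.eq_iff] at hE
  rcases hE with ⟨h1, h2⟩ | ⟨h1, h2⟩ <;>
    simp only [Prod.mk.injEq] at h1 h2 <;> omega

lemma Hedge_ne_Vedge {k h k' h' : ℤ} : Hedge k h ≠ Vedge k' h' := by
  intro hE
  rw [Sym2.eq_iff] at hE
  rcases hE with ⟨h1, h2⟩ | ⟨h1, h2⟩ <;>
    simp only [Prod.mk.injEq] at h1 h2 <;> omega

lemma gridAdj_canon {u v : GridV} (h : GridAdj u v) :
    ∃ k h', s(u, v) = Hedge k h' ∨ s(u, v) = Vedge k h' := by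
  obtain ⟨u1, u2⟩ := u
  obtain ⟨v1, v2⟩ := v
  simp only [GridAdj] at h
  have hc : (v1 = u1 + 1 ∧ v2 = u2) ∨ (u1 = v1 + 1 ∧ u2 = v2) ∨
      (v2 = u2 + 1 ∧ v1 = u1) ∨ (u2 = v2 + 1 ∧ u1 = v1) := by
    rcases abs_cases (u1 - v1) with ⟨ha1, ha2⟩ | ⟨ha1, ha2⟩ <;>
      rcases abs_cases (u2 - v2) with ⟨hb1, hb2⟩ | ⟨hb1, hb2⟩ <;> omega
  rcases hc with ⟨e1, e2⟩ | ⟨e1, e2⟩ | ⟨e1, e2⟩ | ⟨e1, e2⟩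
  · exact ⟨u1, u2, Or.inl (by rw [e1, e2])⟩
  · exact ⟨v1, v2, Or.inl (by rw [e1, e2, Sym2.eq_swap])⟩
  · exact ⟨u1, u2, Or.inr (by rw [e1, e2])⟩
  · exact ⟨v1, v2, Or.inr (by rw [e1, e2, Sym2.eq_swap])⟩

/-! ### Segment geometry -/

lemma mem_segH {x c : ℝ} {q : ℝ × ℝ} :
    q ∈ segment ℝ (x, c) (x + 1, c) ↔ q.2 = c ∧ x ≤ q.1 ∧ q.1 ≤ x + 1 := by
  constructor
  · rintro ⟨a, b, ha, hb, hab, rfl⟩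
    simp only [Prod.smul_mk, smul_eq_mul, Prod.mk_add_mk]
    have h1 : a * x + b * (x + 1) = x + b := by linear_combination x * hab
    have h2 : a * c + b * c = c := by linear_combination c * hab
    exact ⟨h2, by rw [h1]; linarith, by rw [h1]; linarith⟩
  · rintro ⟨h2, hl, hr⟩
    refine ⟨x + 1 - q.1, q.1 - x, by linarith, by linarith, by ring, ?_⟩
    simp only [Prod.smul_mk, smul_eq_mul, Prod.mk_add_mk]
    have hq : q = (q.1, q.2) := rfl
    rw [hq, h2]
    exact Prod.ext (by ring) (by ring)

lemma mem_segV {x c : ℝ} {q : ℝ × ℝ} :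
    q ∈ segment ℝ (c, x) (c, x + 1) ↔ q.1 = c ∧ x ≤ q.2 ∧ q.2 ≤ x + 1 := by
  constructor
  · rintro ⟨a, b, ha, hb, hab, rfl⟩
    simp only [Prod.smul_mk, smul_eq_mul, Prod.mk_add_mk]
    have h1 : a * x + b * (x + 1) = x + b := by linear_combination x * hab
    have h2 : a * c + b * c = c := by linear_combination c * hab
    exact ⟨h2, by rw [h1]; linarith, by rw [h1]; linarith⟩
  · rintro ⟨h2, hl, hr⟩
    refine ⟨x + 1 - q.2, q.2 - x, by linarith, by linarith, by ring, ?_⟩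
    simp only [Prod.smul_mk, smul_eq_mul, Prod.mk_add_mk]
    have hq : q = (q.1, q.2) := rfl
    rw [hq, h2]
    exact Prod.ext (by ring) (by ring)

lemma edgeSeg_mk (a b : GridV) : edgeSeg s(a, b) = segment ℝ (toPlane a) (toPlane b) := rfl

lemma edgeSeg_Hedge (k h : ℤ) :
    edgeSeg (Hedge k h) =
      segment ℝ (((k : ℝ) - 1/2), ((h : ℝ) - 1/2)) (((k : ℝ) - 1/2) + 1, ((h : ℝ) - 1/2)) := by
  rw [edgeSeg_mk]
  unfold toPlane
  push_cast
  rw [show ((k:ℝ) + 1 - 1/2) = (k:ℝ) - 1/2 + 1 from by ring]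

lemma edgeSeg_Vedge (k h : ℤ) :
    edgeSeg (Vedge k h) =
      segment ℝ (((k : ℝ) - 1/2), ((h : ℝ) - 1/2)) (((k : ℝ) - 1/2), ((h : ℝ) - 1/2) + 1) := by
  rw [edgeSeg_mk]
  unfold toPlane
  push_cast
  rw [show ((h:ℝ) + 1 - 1/2) = (h:ℝ) - 1/2 + 1 from by ring]

lemma mem_edgeSeg_Hedge {k h : ℤ} {q : ℝ × ℝ} :
    q ∈ edgeSeg (Hedge k h) ↔
      q.2 = (h : ℝ) - 1/2 ∧ (k : ℝ) - 1/2 ≤ q.1 ∧ q.1 ≤ (k : ℝ) + 1/2 := by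
  rw [edgeSeg_Hedge, mem_segH]
  constructor <;> rintro ⟨h1, h2, h3⟩ <;> exact ⟨h1, by linarith, by linarith⟩

lemma mem_edgeSeg_Vedge {k h : ℤ} {q : ℝ × ℝ} :
    q ∈ edgeSeg (Vedge k h) ↔
      q.1 = (k : ℝ) - 1/2 ∧ (h : ℝ) - 1/2 ≤ q.2 ∧ q.2 ≤ (h : ℝ) + 1/2 := by
  rw [edgeSeg_Vedge, mem_segV]
  constructor <;> rintro ⟨h1, h2, h3⟩ <;> exact ⟨h1, by linarith, by linarith⟩
/-! ### Integer-parity helpers -/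

lemma int_ne_int_sub_half (m k : ℤ) : (m : ℝ) ≠ (k : ℝ) - 1/2 := by
  intro hE
  have h2 : ((2 * m : ℤ) : ℝ) = ((2 * k - 1 : ℤ) : ℝ) := by push_cast; linarith
  have := Int.cast_injective h2
  omega

lemma int_between {m k : ℤ} (h1 : (k : ℝ) - 1/2 ≤ (m : ℝ)) (h2 : (m : ℝ) ≤ (k : ℝ) + 1/2) :
    m = k := by
  have a1 : ((2 * k - 1 : ℤ) : ℝ) ≤ ((2 * m : ℤ) : ℝ) := by push_cast; linarith
  have a2 : ((2 * m : ℤ) : ℝ) ≤ ((2 * k + 1 : ℤ) : ℝ) := by push_cast; linarith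
  have b1 := Int.cast_le.mp a1
  have b2 := Int.cast_le.mp a2
  omega

lemma half_eq_half {h h' : ℤ} (hE : (h : ℝ) - 1/2 = (h' : ℝ) - 1/2) : h = h' := by
  have : (h : ℝ) = (h' : ℝ) := by linarith
  exact_mod_cast this

lemma half_in_unit {h z : ℤ} (h1 : (z : ℝ) ≤ (h : ℝ) - 1/2) (h2 : (h : ℝ) - 1/2 ≤ (z : ℝ) + 1) :
    h = z + 1 := by
  have a1 : ((2 * z : ℤ) : ℝ) ≤ ((2 * h - 1 : ℤ) : ℝ) := by push_cast; linarith
  have a2 : ((2 * h - 1 : ℤ) : ℝ) ≤ ((2 * z + 2 : ℤ) : ℝ) := by push_cast; linarith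
  have b1 := Int.cast_le.mp a1
  have b2 := Int.cast_le.mp a2
  omega

lemma int_in_half_unit {t h : ℤ} (h1 : (h : ℝ) - 1/2 ≤ (t : ℝ)) (h2 : (t : ℝ) ≤ (h : ℝ) + 1/2) :
    t = h := int_between h1 h2

/-! ### Midpoints -/

lemma midH_mem (k h : ℤ) : (((k : ℝ)), ((h : ℝ) - 1/2)) ∈ edgeSeg (Hedge k h) := by
  rw [mem_edgeSeg_Hedge]
  exact ⟨rfl, by norm_num, by norm_num⟩

lemma midV_mem (k h : ℤ) : (((k : ℝ) - 1/2), ((h : ℝ))) ∈ edgeSeg (Vedge k h) := by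
  rw [mem_edgeSeg_Vedge]
  exact ⟨rfl, by norm_num, by norm_num⟩

lemma midH_on {k h k' h' : ℤ} (hm : (((k : ℝ)), ((h : ℝ) - 1/2)) ∈ edgeSeg (Hedge k' h')) :
    k = k' ∧ h = h' := by
  rw [mem_edgeSeg_Hedge] at hm
  obtain ⟨h1, h2, h3⟩ := hm
  exact ⟨int_between h2 h3, half_eq_half h1⟩

lemma midH_not_on_V {k h k' h' : ℤ} :
    (((k : ℝ)), ((h : ℝ) - 1/2)) ∉ edgeSeg (Vedge k' h') := by
  rw [mem_edgeSeg_Vedge]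
  rintro ⟨h1, -, -⟩
  exact int_ne_int_sub_half k k' h1

lemma midV_on {k h k' h' : ℤ} (hm : (((k : ℝ) - 1/2), ((h : ℝ))) ∈ edgeSeg (Vedge k' h')) :
    k = k' ∧ h = h' := by
  rw [mem_edgeSeg_Vedge] at hm
  obtain ⟨h1, h2, h3⟩ := hm
  exact ⟨half_eq_half h1, int_between h2 h3⟩

lemma midV_not_on_H {k h k' h' : ℤ} :
    (((k : ℝ) - 1/2), ((h : ℝ))) ∉ edgeSeg (Hedge k' h') := by
  rw [mem_edgeSeg_Hedge]
  rintro ⟨h1, -, -⟩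
  exact int_ne_int_sub_half h h' h1

/-! ### Carrier lemmas -/

lemma mem_carrierOf {E : Set (Sym2 GridV)} {q : ℝ × ℝ} :
    q ∈ carrierOf E ↔ ∃ e ∈ E, q ∈ edgeSeg e := by
  simp [carrierOf]

/-- All edges of `E` are canonical grid edges. -/
def Canon (E : Set (Sym2 GridV)) : Prop :=
  ∀ e ∈ E, ∃ k h, e = Hedge k h ∨ e = Vedge k h

lemma ctr_not_in_carrier {E : Set (Sym2 GridV)} (hC : Canon E) (z : GridV) :
    ctr z ∉ carrierOf E := by
  rw [mem_carrierOf]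
  rintro ⟨e, he, hq⟩
  obtain ⟨k, h, hc | hc⟩ := hC e he <;> subst hc
  · rw [mem_edgeSeg_Hedge] at hq
    exact int_ne_int_sub_half z.2 h hq.1
  · rw [mem_edgeSeg_Vedge] at hq
    exact int_ne_int_sub_half z.1 k hq.1

lemma ctr_up (z : GridV) : ctr (z + (0, 1)) = (((z.1 : ℝ)), ((z.2 : ℝ) + 1)) := by
  obtain ⟨z1, z2⟩ := z
  simp [ctr, Prod.ext_iff]

lemma ctr_right (z : GridV) : ctr (z + (1, 0)) = (((z.1 : ℝ) + 1), ((z.2 : ℝ))) := by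
  obtain ⟨z1, z2⟩ := z
  simp [ctr, Prod.ext_iff]

lemma segCtrV_avoid {E : Set (Sym2 GridV)} (hC : Canon E) {z : GridV} (hne : topE z ∉ E) :
    ∀ q ∈ segment ℝ (ctr z) (ctr (z + (0, 1))), q ∉ carrierOf E := by
  intro q hq hcar
  rw [ctr_up] at hq
  rw [mem_segV] at hq
  obtain ⟨hq1, hq2, hq3⟩ := hq
  rw [mem_carrierOf] at hcar
  obtain ⟨e, he, hqe⟩ := hcar
  obtain ⟨k, h, hc | hc⟩ := hC e he <;> subst hc
  · rw [mem_edgeSeg_Hedge] at hqe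
    obtain ⟨g1, g2, g3⟩ := hqe
    have hh : h = z.2 + 1 := half_in_unit (by rw [← g1]; exact hq2) (by rw [← g1]; exact hq3)
    have hk : k = z.1 := by
      have : (z.1 : ℝ) = (k : ℝ) → z.1 = k := fun h => by exact_mod_cast h
      refine (int_between ?_ ?_).symm <;> rw [← hq1] <;> [exact g2; exact g3]
    subst hh hk
    exact hne he
  · rw [mem_edgeSeg_Vedge] at hqe
    exact int_ne_int_sub_half z.1 k (hq1 ▸ hqe.1)

lemma segCtrH_avoid {E : Set (Sym2 GridV)} (hC : Canon E) {z : GridV} (hne : rightE z ∉ E) :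
    ∀ q ∈ segment ℝ (ctr z) (ctr (z + (1, 0))), q ∉ carrierOf E := by
  intro q hq hcar
  rw [ctr_right, mem_segH] at hq
  obtain ⟨hq1, hq2, hq3⟩ := hq
  obtain ⟨e, he, hqe⟩ := mem_carrierOf.mp hcar
  obtain ⟨k, h, hc | hc⟩ := hC e he <;> subst hc
  · rw [mem_edgeSeg_Hedge] at hqe
    exact int_ne_int_sub_half z.2 h (hq1 ▸ hqe.1)
  · rw [mem_edgeSeg_Vedge] at hqe
    obtain ⟨g1, g2, g3⟩ := hqe
    have hk : k = z.1 + 1 := half_in_unit (by rw [← g1]; exact hq2) (by rw [← g1]; exact hq3)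
    have hh : z.2 = h := int_in_half_unit (t := z.2) (h := h) (by rw [← hq1]; exact g2) (by rw [← hq1]; exact g3)
    subst hk
    exact hne (by show Vedge (z.1 + 1) z.2 ∈ E; rw [hh]; exact he)

/-! ### Cycle combinatorics -/

open Classical

noncomputable def chi (B : Set (Sym2 GridV)) (e : Sym2 GridV) : ZMod 2 :=
  if e ∈ B then 1 else 0

def dirS : Finset GridV := {(1, 0), (-1, 0), (0, 1), (0, -1)}

lemma mem_dirS {d : GridV} : d ∈ dirS ↔ d = (1,0) ∨ d = (-1,0) ∨ d = (0,1) ∨ d = (0,-1) := by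
  simp [dirS]

lemma mem_dirS_of_adj {u v : GridV} (h : GridAdj u v) : v - u ∈ dirS := by
  obtain ⟨u1, u2⟩ := u
  obtain ⟨v1, v2⟩ := v
  simp only [GridAdj] at h
  rw [mem_dirS]
  simp only [Prod.mk_sub_mk, Prod.mk.injEq]
  rcases abs_cases (u1 - v1) with ⟨ha1, ha2⟩ | ⟨ha1, ha2⟩ <;>
    rcases abs_cases (u2 - v2) with ⟨hb1, hb2⟩ | ⟨hb1, hb2⟩ <;> omega

lemma dirS_ne_zero {d : GridV} (hd : d ∈ dirS) : d ≠ 0 := by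
  rw [mem_dirS] at hd
  rcases hd with rfl | rfl | rfl | rfl <;> decide

lemma sym2_s_inj {v a b : GridV} (ha : a ≠ v) (h : s(v, a) = s(v, b)) : a = b := by
  rw [Sym2.eq_iff] at h
  rcases h with ⟨-, h⟩ | ⟨h1, h2⟩
  · exact h
  · exact absurd h2 ha

lemma four_split (g : GridV → ZMod 2) (d₁ d₂ : GridV) (h1 : d₁ ∈ dirS) (h2 : d₂ ∈ dirS)
    (hne : d₁ ≠ d₂) (hz : ∀ d ∈ dirS, d ≠ d₁ → d ≠ d₂ → g d = 0) :
    g (1,0) + g (-1,0) + g (0,1) + g (0,-1) = g d₁ + g d₂ := by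
  have hsum : ∑ d ∈ dirS, g d = g (1,0) + g (-1,0) + g (0,1) + g (0,-1) := by
    show ∑ d ∈ ({(1, 0), (-1, 0), (0, 1), (0, -1)} : Finset GridV), g d = _
    rw [Finset.sum_insert (by decide), Finset.sum_insert (by decide),
      Finset.sum_insert (by decide), Finset.sum_singleton]
    ring
  have hsub : ({d₁, d₂} : Finset GridV) ⊆ dirS := by
    intro x hx
    rcases Finset.mem_insert.mp hx with rfl | hx
    · exact h1
    · rw [Finset.mem_singleton] at hx; subst hx; exact h2
  have hf : ∀ x ∈ dirS, x ∉ ({d₁, d₂} : Finset GridV) → g x = 0 := by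
    intro x hx hnx
    rw [Finset.mem_insert, Finset.mem_singleton] at hnx
    push_neg at hnx
    exact hz x hx hnx.1 hnx.2
  have heq := Finset.sum_subset hsub hf
  rw [Finset.sum_pair hne] at heq
  rw [← hsum, ← heq]

namespace GridCycle

variable (C : GridCycle)

lemma nz : NeZero C.n := ⟨by have := C.hn; omega⟩

lemma edgeSet_finite : C.edgeSet.Finite := by
  haveI := C.nz
  have : C.edgeSet = Set.range (fun i => s(C.f i, C.f (i + 1))) := by
    ext e; simp [GridCycle.edgeSet, Set.range, eq_comm]
  rw [this]
  exact Set.finite_range _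

lemma canon_edgeSet : Canon C.edgeSet := by
  rintro e ⟨i, rfl⟩
  exact gridAdj_canon (C.adj i)

lemma two_ne_zero : (2 : ZMod C.n) ≠ 0 := by
  haveI := C.nz
  intro h
  have h2 : ((2 : ℕ) : ZMod C.n) = 0 := by exact_mod_cast h
  have := (ZMod.natCast_eq_zero_iff 2 C.n).mp h2
  have := Nat.le_of_dvd (by norm_num) this
  have := C.hn
  omega

lemma f_sub_ne_add (i : ZMod C.n) : C.f (i - 1) ≠ C.f (i + 1) := by
  intro h
  have := C.inj h
  have h2 : (2 : ZMod C.n) = 0 := by linear_combination -this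
  exact C.two_ne_zero h2

lemma mem_at {e : Sym2 GridV} (he : e ∈ C.edgeSet) {i : ZMod C.n} (hv : C.f i ∈ e) :
    e = s(C.f (i - 1), C.f i) ∨ e = s(C.f i, C.f (i + 1)) := by
  obtain ⟨j, rfl⟩ := he
  rw [Sym2.mem_iff] at hv
  rcases hv with hv | hv
  · right; rw [C.inj hv.symm]
  · left
    have hj : j = i - 1 := by
      have := C.inj hv.symm
      linear_combination this
    rw [hj]
    congr 1
    ring

lemma vertex_of_mem {e : Sym2 GridV} (he : e ∈ C.edgeSet) {v : GridV} (hv : v ∈ e) :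
    ∃ i, v = C.f i := by
  obtain ⟨j, rfl⟩ := he
  rw [Sym2.mem_iff] at hv
  rcases hv with hv | hv
  · exact ⟨j, hv⟩
  · exact ⟨j + 1, hv⟩

/-- The key local computation: the four-direction `χ`-sum of a subset `B ⊆ C.edgeSet`
at the vertex `C.f j` equals `χ` of the two cycle edges at `C.f j`. -/
lemma foursum_at (B : Set (Sym2 GridV)) (hB : B ⊆ C.edgeSet) (j : ZMod C.n) :
    chi B s(C.f j, C.f j + (1,0)) + chi B s(C.f j, C.f j + (-1,0)) +
      chi B s(C.f j, C.f j + (0,1)) + chi B s(C.f j, C.f j + (0,-1)) =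
    chi B s(C.f (j - 1), C.f j) + chi B s(C.f j, C.f (j + 1)) := by
  set v := C.f j with hv
  set d₁ := C.f (j + 1) - v with hd₁
  set d₂ := C.f (j - 1) - v with hd₂
  have e₁ : v + d₁ = C.f (j + 1) := by rw [hd₁]; ring
  have e₂ : v + d₂ = C.f (j - 1) := by rw [hd₂]; ring
  have m₁ : d₁ ∈ dirS := by rw [hd₁, hv]; exact mem_dirS_of_adj (C.adj j)
  have m₂ : d₂ ∈ dirS := by
    rw [hd₂, hv]
    have : GridAdj (C.f (j - 1)) (C.f j) := by
      have := C.adj (j - 1)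
      rwa [sub_add_cancel] at this
    have hsymm : GridAdj (C.f j) (C.f (j - 1)) := by
      unfold GridAdj at this ⊢
      rw [abs_sub_comm, abs_sub_comm (C.f j).2]
      exact this
    exact mem_dirS_of_adj hsymm
  have hne : d₁ ≠ d₂ := by
    intro h
    apply C.f_sub_ne_add j
    have : C.f (j - 1) = v + d₂ := e₂.symm
    rw [this, ← h, e₁]
  have hzz : ∀ d ∈ dirS, d ≠ d₁ → d ≠ d₂ → chi B s(v, v + d) = 0 := by
    intro d hd hne1 hne2
    unfold chi
    rw [if_neg]
    intro hmem
    have heE : s(v, v + d) ∈ C.edgeSet := hB hmem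
    have hvmem : C.f j ∈ s(v, v + d) := by rw [← hv]; exact Sym2.mem_mk_left _ _
    rcases C.mem_at heE hvmem with h | h
    · apply hne2
      have : s(v, v + d) = s(v, v + d₂) := by
        rw [h, ← e₂, ← hv, Sym2.eq_swap]
      have := sym2_s_inj ?_ this
      · exact add_left_cancel (by rw [this] : v + d = v + d₂)
      · intro hvd
        exact dirS_ne_zero hd (by linear_combination hvd)
    · apply hne1
      have : s(v, v + d) = s(v, v + d₁) := by rw [h, ← e₁, ← hv]
      have := sym2_s_inj ?_ this
      · exact add_left_cancel (by rw [this] : v + d = v + d₁)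
      · intro hvd
        exact dirS_ne_zero hd (by linear_combination hvd)
  have := four_split (fun d => chi B s(v, v + d)) d₁ d₂ m₁ m₂ hne hzz
  rw [this, e₁, e₂]
  rw [show s(v, C.f (j - 1)) = s(C.f (j - 1), v) from Sym2.eq_swap]
  ring

end GridCycle
namespace GridCycle

variable (C : GridCycle)

lemma edge_mem (i : ZMod C.n) : s(C.f i, C.f (i + 1)) ∈ C.edgeSet := ⟨i, rfl⟩

lemma edge_mem' (i : ZMod C.n) : s(C.f (i - 1), C.f i) ∈ C.edgeSet := by
  refine ⟨i - 1, ?_⟩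
  rw [sub_add_cancel]

lemma deg4 (v : GridV) :
    chi C.edgeSet s(v, v + (1,0)) + chi C.edgeSet s(v, v + (-1,0)) +
      chi C.edgeSet s(v, v + (0,1)) + chi C.edgeSet s(v, v + (0,-1)) = 0 := by
  by_cases hv : ∃ j, v = C.f j
  · obtain ⟨j, rfl⟩ := hv
    rw [C.foursum_at C.edgeSet subset_rfl j]
    unfold chi
    rw [if_pos (C.edge_mem' j), if_pos (C.edge_mem j)]
    decide
  · have hz : ∀ d : GridV, chi C.edgeSet s(v, v + d) = 0 := by
      intro d
      unfold chi
      rw [if_neg]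
      intro hmem
      exact hv (C.vertex_of_mem hmem (Sym2.mem_mk_left _ _))
    rw [hz, hz, hz, hz]
    decide

lemma eq_of_even_subset (B : Set (Sym2 GridV)) (hB : B ⊆ C.edgeSet)
    (hsum : ∀ v : GridV,
      chi B s(v, v + (1,0)) + chi B s(v, v + (-1,0)) +
        chi B s(v, v + (0,1)) + chi B s(v, v + (0,-1)) = 0)
    (hne : B.Nonempty) : B = C.edgeSet := by
  haveI := C.nz
  obtain ⟨e0, he0⟩ := hne
  obtain ⟨i0, he0'⟩ := hB he0
  rw [he0'] at he0
  have step : ∀ i : ZMod C.n, s(C.f i, C.f (i + 1)) ∈ B →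
      s(C.f (i + 1), C.f (i + 1 + 1)) ∈ B := by
    intro i hi
    have h4 := C.foursum_at B hB (i + 1)
    rw [hsum (C.f (i + 1))] at h4
    have e1 : (i + 1) - 1 = i := by ring
    rw [e1] at h4
    have hc : chi B s(C.f i, C.f (i + 1)) = 1 := by unfold chi; rw [if_pos hi]
    rw [hc] at h4
    by_cases hm : s(C.f (i + 1), C.f (i + 1 + 1)) ∈ B
    · exact hm
    · exfalso
      have hz : chi B s(C.f (i + 1), C.f (i + 1 + 1)) = 0 := by unfold chi; rw [if_neg hm]
      rw [hz] at h4
      exact absurd h4 (by decide)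
  have all : ∀ k : ℕ, s(C.f (i0 + (k : ZMod C.n)), C.f (i0 + (k : ZMod C.n) + 1)) ∈ B := by
    intro k
    induction k with
    | zero => simpa using he0
    | succ m ih =>
      have hs := step (i0 + (m : ZMod C.n)) ih
      have harg : i0 + ((m + 1 : ℕ) : ZMod C.n) = i0 + (m : ZMod C.n) + 1 := by
        push_cast
        ring
      rw [harg]
      exact hs
  apply Set.Subset.antisymm hB
  rintro e ⟨j, rfl⟩
  have hk := all (j - i0).val
  have harg : i0 + (((j - i0).val : ℕ) : ZMod C.n) = j := by
    rw [ZMod.natCast_val, ZMod.cast_id]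
    ring
  rw [harg] at hk
  exact hk

end GridCycle
/-! ### Column-crossing parity -/

lemma zmod2_cancel {a b x : ZMod 2} (h : a + b + x = 0) : a + b = x := by
  revert h
  revert a b x
  decide

lemma zmod2_ne_add_one (x : ZMod 2) : x + 1 ≠ x := by revert x; decide

lemma zmod2_eq_of_add_zero {x y : ZMod 2} (h : x + y = 0) : x = y := by
  revert h; revert x y; decide

lemma zmod2_ne_of_add_one {x y : ZMod 2} (h : x + y = 1) : x ≠ y := by
  revert h; revert x y; decide

noncomputable def Np (E : Set (Sym2 GridV)) (z : GridV) : ZMod 2 :=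
  (({h : ℤ | z.2 < h ∧ Hedge z.1 h ∈ E}).ncard : ZMod 2)

lemma col_finite {E : Set (Sym2 GridV)} (hfin : E.Finite) (c t : ℤ) :
    ({h : ℤ | t < h ∧ Hedge c h ∈ E}).Finite := by
  have hinj : Set.InjOn (fun h : ℤ => Hedge c h) ((fun h : ℤ => Hedge c h) ⁻¹' E) := by
    intro x _ y _ hxy
    exact (Hedge_inj hxy).2
  have := Set.Finite.preimage hinj hfin
  exact this.subset (fun h hh => hh.2)

lemma col_step {E : Set (Sym2 GridV)} (hfin : E.Finite) (c t : ℤ) :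
    Np E (c, t) = Np E (c, t + 1) + chi E (Hedge c (t + 1)) := by
  have hA : ({h : ℤ | t + 1 < h ∧ Hedge c h ∈ E}).Finite := col_finite hfin c (t + 1)
  unfold Np chi
  by_cases hP : Hedge c (t + 1) ∈ E
  · have hset : {h : ℤ | (c, t).2 < h ∧ Hedge (c, t).1 h ∈ E} =
        insert (t + 1) {h : ℤ | t + 1 < h ∧ Hedge c h ∈ E} := by
      ext x
      simp only [Set.mem_setOf_eq, Set.mem_insert_iff]
      constructor
      · rintro ⟨hx, hPx⟩
        by_cases hxe : x = t + 1
        · exact Or.inl hxe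
        · exact Or.inr ⟨by omega, hPx⟩
      · rintro (rfl | ⟨hx, hPx⟩)
        · exact ⟨by omega, hP⟩
        · exact ⟨by omega, hPx⟩
    rw [hset, Set.ncard_insert_of_notMem (by simp) hA, if_pos hP]
    push_cast
    ring
  · have hset : {h : ℤ | (c, t).2 < h ∧ Hedge (c, t).1 h ∈ E} =
        {h : ℤ | t + 1 < h ∧ Hedge c h ∈ E} := by
      ext x
      simp only [Set.mem_setOf_eq]
      constructor
      · rintro ⟨hx, hPx⟩
        refine ⟨?_, hPx⟩
        by_cases hxe : x = t + 1
        · subst hxe; exact absurd hPx hP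
        · omega
      · rintro ⟨hx, hPx⟩
        exact ⟨by omega, hPx⟩
    rw [hset, if_neg hP]
    ring

namespace GridCycle

variable (C : GridCycle)

lemma vert_bound : ∃ M : ℤ, ∀ e ∈ C.edgeSet, ∀ v ∈ e, v.2 ≤ M := by
  haveI := C.nz
  obtain ⟨M, hM⟩ := (Set.finite_range (fun i => (C.f i).2)).bddAbove
  refine ⟨M, fun e he v hv => ?_⟩
  obtain ⟨i, rfl⟩ := C.vertex_of_mem he hv
  exact hM ⟨i, rfl⟩

lemma col_pair (c t : ℤ) :
    Np C.edgeSet (c, t) + Np C.edgeSet (c + 1, t) = chi C.edgeSet (Vedge (c + 1) t) := by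
  obtain ⟨M, hM⟩ := C.vert_bound
  have hfin := C.edgeSet_finite
  -- the quantity which is invariant in t
  set Q : ℤ → ZMod 2 := fun t =>
    Np C.edgeSet (c, t) + Np C.edgeSet (c + 1, t) + chi C.edgeSet (Vedge (c + 1) t) with hQ
  have hbase : ∀ t : ℤ, M ≤ t → Q t = 0 := by
    intro t ht
    have h1 : ∀ c' : ℤ, Np C.edgeSet (c', t) = 0 := by
      intro c'
      unfold Np
      have : {h : ℤ | ((c' : ℤ), t).2 < h ∧ Hedge c' h ∈ C.edgeSet} = ∅ := by
        ext x
        simp only [Set.mem_setOf_eq, Set.mem_empty_iff_false, iff_false, not_and]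
        intro hx hPx
        have := hM _ hPx ((c', x) : GridV) (Sym2.mem_mk_left _ _)
        simp at this
        omega
      rw [this]
      simp
    have h2 : chi C.edgeSet (Vedge (c + 1) t) = 0 := by
      unfold chi
      rw [if_neg]
      intro hPx
      have := hM _ hPx ((c + 1, t + 1) : GridV) (Sym2.mem_mk_right _ _)
      simp at this
      omega
    rw [hQ]
    simp [h1, h2]
  have hstep : ∀ t : ℤ, Q t = Q (t + 1) := by
    intro t
    have hd := C.deg4 ((c + 1, t + 1) : GridV)
    have e1 : s(((c + 1, t + 1) : GridV), ((c + 1, t + 1) : GridV) + (1, 0)) =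
        Hedge (c + 1) (t + 1) := by
      rw [show ((c + 1, t + 1) : GridV) + (1, 0) = (c + 1 + 1, t + 1) from by
        simp [Prod.ext_iff]]
    have e2 : s(((c + 1, t + 1) : GridV), ((c + 1, t + 1) : GridV) + (-1, 0)) =
        Hedge c (t + 1) := by
      rw [show ((c + 1, t + 1) : GridV) + (-1, 0) = (c, t + 1) from by
        simp [Prod.ext_iff]; try ring]
      exact Sym2.eq_swap
    have e3 : s(((c + 1, t + 1) : GridV), ((c + 1, t + 1) : GridV) + (0, 1)) =
        Vedge (c + 1) (t + 1) := by
      rw [show ((c + 1, t + 1) : GridV) + (0, 1) = (c + 1, t + 1 + 1) from by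
        simp [Prod.ext_iff]]
    have e4 : s(((c + 1, t + 1) : GridV), ((c + 1, t + 1) : GridV) + (0, -1)) =
        Vedge (c + 1) t := by
      rw [show ((c + 1, t + 1) : GridV) + (0, -1) = (c + 1, t) from by
        simp [Prod.ext_iff]; try ring]
      exact Sym2.eq_swap
    rw [e1, e2, e3, e4] at hd
    have hs1 := col_step hfin c t
    have hs2 := col_step hfin (c + 1) t
    rw [hQ]
    simp only
    rw [hs1, hs2]
    have : ∀ x1 x2 hA hB vA vB : ZMod 2,
        hA + hB + vB + vA = 0 → (x1 + hA) + (x2 + hB) + vA = x1 + x2 + vB := by decide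
    exact this _ _ _ _ _ _ (by linear_combination hd)
  have hall : ∀ k : ℕ, Q (M - (k : ℤ)) = 0 := by
    intro k
    induction k with
    | zero => simpa using hbase M le_rfl
    | succ m ih =>
      have := hstep (M - ((m : ℤ) + 1))
      rw [show M - ((m : ℤ) + 1) + 1 = M - (m : ℤ) from by ring] at this
      rw [show (((m + 1 : ℕ)) : ℤ) = (m : ℤ) + 1 from by push_cast; ring]
      rw [this]
      exact ih
  have hQ0 : Q t = 0 := by
    by_cases ht : M ≤ t
    · exact hbase t ht
    · have hk := hall ((M - t).toNat)
      rw [show ((M - t).toNat : ℤ) = M - t from Int.toNat_of_nonneg (by omega)] at hk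
      rw [show M - (M - t) = t from by ring] at hk
      exact hk
  exact zmod2_cancel hQ0

lemma np_ne_H {k h : ℤ} (he : Hedge k h ∈ C.edgeSet) :
    Np C.edgeSet (k, h - 1) ≠ Np C.edgeSet (k, h) := by
  have := col_step C.edgeSet_finite k (h - 1)
  rw [show h - 1 + 1 = h from by ring] at this
  rw [this]
  unfold chi
  rw [if_pos he]
  exact zmod2_ne_add_one _

lemma np_ne_V {k h : ℤ} (he : Vedge k h ∈ C.edgeSet) :
    Np C.edgeSet (k - 1, h) ≠ Np C.edgeSet (k, h) := by
  have := C.col_pair (k - 1) h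
  rw [show k - 1 + 1 = k from by ring] at this
  unfold chi at this
  rw [if_pos he] at this
  exact zmod2_ne_of_add_one this

end GridCycle
/-! ### Dual adjacency and components -/

def dAdj (E : Set (Sym2 GridV)) (z w : GridV) : Prop :=
  (w = z + (0, 1) ∧ topE z ∉ E) ∨ (z = w + (0, 1) ∧ topE w ∉ E) ∨
  (w = z + (1, 0) ∧ rightE z ∉ E) ∨ (z = w + (1, 0) ∧ rightE w ∉ E)

lemma dAdj_symm {E : Set (Sym2 GridV)} {z w : GridV} (h : dAdj E z w) : dAdj E w z := by
  unfold dAdj at h ⊢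
  tauto

/-- The dual component of the square `a` avoiding edges of `E`. -/
def compS (E : Set (Sym2 GridV)) (a : GridV) : Set GridV :=
  {z | Relation.ReflTransGen (dAdj E) a z}

lemma compS_self (E : Set (Sym2 GridV)) (a : GridV) : a ∈ compS E a :=
  Relation.ReflTransGen.refl

lemma compS_closed {E : Set (Sym2 GridV)} {a z w : GridV} (hz : z ∈ compS E a)
    (h : dAdj E z w) : w ∈ compS E a :=
  Relation.ReflTransGen.tail hz h

lemma prod_eta_up (z : GridV) : z + (0, 1) = (z.1, z.2 + 1) := by
  simp [Prod.ext_iff]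

lemma prod_eta_right (z : GridV) : z + (1, 0) = (z.1 + 1, z.2) := by
  simp [Prod.ext_iff]

lemma np_dAdj (C : GridCycle) {z w : GridV} (h : dAdj C.edgeSet z w) :
    Np C.edgeSet z = Np C.edgeSet w := by
  have hfin := C.edgeSet_finite
  have key : ∀ u v : GridV, v = u + (0, 1) → topE u ∉ C.edgeSet →
      Np C.edgeSet u = Np C.edgeSet v := by
    intro u v hv ht
    have := col_step hfin u.1 u.2
    unfold chi at this
    rw [if_neg ht] at this
    rw [hv, prod_eta_up]
    rw [show ((u.1, u.2) : GridV) = u from rfl] at this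
    rw [this]
    ring
  have keyr : ∀ u v : GridV, v = u + (1, 0) → rightE u ∉ C.edgeSet →
      Np C.edgeSet u = Np C.edgeSet v := by
    intro u v hv ht
    have := C.col_pair u.1 u.2
    unfold chi at this
    rw [if_neg ht] at this
    rw [show ((u.1, u.2) : GridV) = u from rfl] at this
    rw [hv, prod_eta_right]
    exact zmod2_eq_of_add_zero this
  rcases h with ⟨hv, ht⟩ | ⟨hv, ht⟩ | ⟨hv, ht⟩ | ⟨hv, ht⟩
  · exact key z w hv ht
  · exact (key w z hv ht).symm
  · exact keyr z w hv ht
  · exact (keyr w z hv ht).symm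

lemma np_const (C : GridCycle) {a z : GridV} (hz : z ∈ compS C.edgeSet a) :
    Np C.edgeSet z = Np C.edgeSet a := by
  induction hz with
  | refl => rfl
  | tail _ hadj ih => rw [← np_dAdj C hadj]; exact ih

/-! ### Boundary of a set of squares -/

open Classical in
noncomputable def iota (S : Set GridV) (z : GridV) : ZMod 2 := if z ∈ S then 1 else 0

/-- The boundary edges of a set `S` of squares. -/
def bdry (S : Set GridV) : Set (Sym2 GridV) :=
  {g | (∃ z, g = topE z ∧ ¬(z ∈ S ↔ z + (0, 1) ∈ S)) ∨
       (∃ z, g = rightE z ∧ ¬(z ∈ S ↔ z + (1, 0) ∈ S))}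

lemma topE_inj {z z' : GridV} (h : topE z = topE z') : z = z' := by
  obtain ⟨h1, h2⟩ := Hedge_inj h
  exact Prod.ext h1 (by omega)

lemma rightE_inj {z z' : GridV} (h : rightE z = rightE z') : z = z' := by
  obtain ⟨h1, h2⟩ := Vedge_inj h
  exact Prod.ext (by omega) h2

lemma mem_bdry_top {S : Set GridV} {z : GridV} :
    topE z ∈ bdry S ↔ ¬(z ∈ S ↔ z + (0, 1) ∈ S) := by
  constructor
  · rintro (⟨z', hz', hx⟩ | ⟨z', hz', hx⟩)
    · rwa [topE_inj hz']
    · exact absurd hz' Hedge_ne_Vedge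
  · intro hx
    exact Or.inl ⟨z, rfl, hx⟩

lemma mem_bdry_right {S : Set GridV} {z : GridV} :
    rightE z ∈ bdry S ↔ ¬(z ∈ S ↔ z + (1, 0) ∈ S) := by
  constructor
  · rintro (⟨z', hz', hx⟩ | ⟨z', hz', hx⟩)
    · exact absurd hz'.symm Hedge_ne_Vedge
    · rwa [rightE_inj hz']
  · intro hx
    exact Or.inr ⟨z, rfl, hx⟩

lemma gv_ext {a b c d : ℤ} (h1 : a = c) (h2 : b = d) : ((a, b) : GridV) = (c, d) := by
  rw [h1, h2]

lemma sym2_R (v1 v2 : ℤ) :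
    s(((v1, v2) : GridV), ((v1, v2) : GridV) + (1, 0)) = topE (v1, v2 - 1) := by
  have h1 : ((v1, v2) : GridV) + (1, 0) = (v1 + 1, v2) := by
    rw [Prod.mk_add_mk]; exact gv_ext (by ring) (by ring)
  have h2 : topE ((v1, v2 - 1) : GridV) = s(((v1, v2) : GridV), ((v1 + 1, v2) : GridV)) := by
    show Hedge v1 (v2 - 1 + 1) = _
    rw [show v2 - 1 + 1 = v2 from by ring]
  rw [h1, h2]

lemma sym2_L (v1 v2 : ℤ) :
    s(((v1, v2) : GridV), ((v1, v2) : GridV) + (-1, 0)) = topE (v1 - 1, v2 - 1) := by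
  have h1 : ((v1, v2) : GridV) + (-1, 0) = (v1 - 1, v2) := by
    rw [Prod.mk_add_mk]; exact gv_ext (by ring) (by ring)
  have h2 : topE ((v1 - 1, v2 - 1) : GridV) =
      s(((v1 - 1, v2) : GridV), ((v1, v2) : GridV)) := by
    show Hedge (v1 - 1) (v2 - 1 + 1) = _
    rw [show v2 - 1 + 1 = v2 from by ring, show Hedge (v1 - 1) v2 =
      s(((v1 - 1, v2) : GridV), ((v1 - 1 + 1, v2) : GridV)) from rfl,
      show v1 - 1 + 1 = v1 from by ring]
  rw [h1, h2, Sym2.eq_swap]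

lemma sym2_U (v1 v2 : ℤ) :
    s(((v1, v2) : GridV), ((v1, v2) : GridV) + (0, 1)) = rightE (v1 - 1, v2) := by
  have h1 : ((v1, v2) : GridV) + (0, 1) = (v1, v2 + 1) := by
    rw [Prod.mk_add_mk]; exact gv_ext (by ring) (by ring)
  have h2 : rightE ((v1 - 1, v2) : GridV) =
      s(((v1, v2) : GridV), ((v1, v2 + 1) : GridV)) := by
    show Vedge (v1 - 1 + 1) v2 = _
    rw [show v1 - 1 + 1 = v1 from by ring]
  rw [h1, h2]

lemma sym2_D (v1 v2 : ℤ) :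
    s(((v1, v2) : GridV), ((v1, v2) : GridV) + (0, -1)) = rightE (v1 - 1, v2 - 1) := by
  have h1 : ((v1, v2) : GridV) + (0, -1) = (v1, v2 - 1) := by
    rw [Prod.mk_add_mk]; exact gv_ext (by ring) (by ring)
  have h2 : rightE ((v1 - 1, v2 - 1) : GridV) =
      s(((v1, v2 - 1) : GridV), ((v1, v2) : GridV)) := by
    show Vedge (v1 - 1 + 1) (v2 - 1) = _
    rw [show v1 - 1 + 1 = v1 from by ring, show Vedge v1 (v2 - 1) =
      s(((v1, v2 - 1) : GridV), ((v1, v2 - 1 + 1) : GridV)) from rfl,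
      show v2 - 1 + 1 = v2 from by ring]
  rw [h1, h2, Sym2.eq_swap]

lemma chi_bdry_top {S : Set GridV} (z : GridV) :
    chi (bdry S) (topE z) = iota S z + iota S (z + (0, 1)) := by
  unfold chi iota
  by_cases h1 : z ∈ S <;> by_cases h2 : z + (0, 1) ∈ S
  · rw [if_neg (fun hc => (mem_bdry_top.mp hc) (iff_of_true h1 h2)), if_pos h1, if_pos h2]
    decide
  · rw [if_pos (mem_bdry_top.mpr (fun hiff => h2 (hiff.mp h1))), if_pos h1, if_neg h2]
    decide
  · rw [if_pos (mem_bdry_top.mpr (fun hiff => h1 (hiff.mpr h2))), if_neg h1, if_pos h2]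
    decide
  · rw [if_neg (fun hc => (mem_bdry_top.mp hc) (iff_of_false h1 h2)), if_neg h1, if_neg h2]
    decide

lemma chi_bdry_right {S : Set GridV} (z : GridV) :
    chi (bdry S) (rightE z) = iota S z + iota S (z + (1, 0)) := by
  unfold chi iota
  by_cases h1 : z ∈ S <;> by_cases h2 : z + (1, 0) ∈ S
  · rw [if_neg (fun hc => (mem_bdry_right.mp hc) (iff_of_true h1 h2)), if_pos h1, if_pos h2]
    decide
  · rw [if_pos (mem_bdry_right.mpr (fun hiff => h2 (hiff.mp h1))), if_pos h1, if_neg h2]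
    decide
  · rw [if_pos (mem_bdry_right.mpr (fun hiff => h1 (hiff.mpr h2))), if_neg h1, if_pos h2]
    decide
  · rw [if_neg (fun hc => (mem_bdry_right.mp hc) (iff_of_false h1 h2)), if_neg h1, if_neg h2]
    decide

lemma bdry_even (S : Set GridV) (v : GridV) :
    chi (bdry S) s(v, v + (1,0)) + chi (bdry S) s(v, v + (-1,0)) +
      chi (bdry S) s(v, v + (0,1)) + chi (bdry S) s(v, v + (0,-1)) = 0 := by
  obtain ⟨v1, v2⟩ := v
  rw [sym2_R, sym2_L, sym2_U, sym2_D, chi_bdry_top, chi_bdry_top, chi_bdry_right,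
    chi_bdry_right]
  rw [show ((v1, v2 - 1) : GridV) + (0, 1) = (v1, v2) from by
      rw [Prod.mk_add_mk]; exact gv_ext (by ring) (by ring),
    show ((v1 - 1, v2 - 1) : GridV) + (0, 1) = (v1 - 1, v2) from by
      rw [Prod.mk_add_mk]; exact gv_ext (by ring) (by ring),
    show ((v1 - 1, v2) : GridV) + (1, 0) = (v1, v2) from by
      rw [Prod.mk_add_mk]; exact gv_ext (by ring) (by ring),
    show ((v1 - 1, v2 - 1) : GridV) + (1, 0) = (v1, v2 - 1) from by
      rw [Prod.mk_add_mk]; exact gv_ext (by ring) (by ring)]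
  have : ∀ a b c d : ZMod 2, (a + b) + (c + d) + (d + b) + (c + a) = 0 := by decide
  exact this (iota S (v1, v2 - 1)) (iota S (v1, v2)) (iota S (v1 - 1, v2 - 1))
    (iota S (v1 - 1, v2))

lemma bdry_sub {E : Set (Sym2 GridV)} {S : Set GridV}
    (hcl : ∀ z ∈ S, ∀ w, dAdj E z w → w ∈ S) : bdry S ⊆ E := by
  rintro g (⟨z, rfl, hx⟩ | ⟨z, rfl, hx⟩)
  · by_contra hne
    apply hx
    constructor
    · intro hz
      exact hcl z hz _ (Or.inl ⟨rfl, hne⟩)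
    · intro hz
      exact hcl _ hz z (Or.inr (Or.inl ⟨rfl, hne⟩))
  · by_contra hne
    apply hx
    constructor
    · intro hz
      exact hcl z hz _ (Or.inr (Or.inr (Or.inl ⟨rfl, hne⟩)))
    · intro hz
      exact hcl _ hz z (Or.inr (Or.inr (Or.inr ⟨rfl, hne⟩)))

lemma bdry_nonempty {S : Set GridV} (hfin : S.Finite) (hne : S.Nonempty) :
    ∃ z ∈ S, z + (0, 1) ∉ S ∧ topE z ∈ bdry S := by
  obtain ⟨z, hz, hmax⟩ := Set.Finite.exists_maximalFor Prod.snd S hfin hne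
  have hup : z + (0, 1) ∉ S := by
    intro hw
    have h2 : (z + (0, 1)).2 = z.2 + 1 := by rw [prod_eta_up]
    have := hmax hw (by omega)
    omega
  exact ⟨z, hz, hup, mem_bdry_top.mpr (fun hiff => hup (hiff.mp hz))⟩

/-- Discrete Jordan-type contradiction: two disjoint nonempty finite dual components
cannot both exist for a cycle. -/
lemma discrete_jordan (C : GridCycle) {a b : GridV}
    (hNe : Np C.edgeSet a ≠ Np C.edgeSet b)
    (hfa : (compS C.edgeSet a).Finite) (hfb : (compS C.edgeSet b).Finite) : False := by
  set E := C.edgeSet with hE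
  set Sa := compS E a with hSa
  set Sb := compS E b with hSb
  have hdisj : ∀ z, z ∈ Sa → z ∈ Sb → False := by
    intro z h1 h2
    exact hNe ((np_const C h1).symm.trans (np_const C h2))
  have hclA : ∀ z ∈ Sa, ∀ w, dAdj E z w → w ∈ Sa := fun z hz w h => compS_closed hz h
  have hclB : ∀ z ∈ Sb, ∀ w, dAdj E z w → w ∈ Sb := fun z hz w h => compS_closed hz h
  have hBa : bdry Sa = E := by
    apply C.eq_of_even_subset _ (bdry_sub hclA) (fun v => bdry_even Sa v)
    obtain ⟨z, _, _, hzb⟩ := bdry_nonempty hfa ⟨a, compS_self E a⟩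
    exact ⟨_, hzb⟩
  have hBb : bdry Sb = E := by
    apply C.eq_of_even_subset _ (bdry_sub hclB) (fun v => bdry_even Sb v)
    obtain ⟨z, _, _, hzb⟩ := bdry_nonempty hfb ⟨b, compS_self E b⟩
    exact ⟨_, hzb⟩
  -- topmost square of the union
  obtain ⟨z, hz, hmax⟩ := Set.Finite.exists_maximalFor Prod.snd _ (hfa.union hfb)
    ⟨a, Or.inl (compS_self E a)⟩
  have hup : z + (0, 1) ∉ Sa ∪ Sb := by
    intro hw
    have h2 : (z + (0, 1)).2 = z.2 + 1 := by rw [prod_eta_up]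
    have := hmax hw (by omega)
    omega
  have htopE : topE z ∈ E := by
    by_contra hne
    rcases hz with hz | hz
    · exact hup (Or.inl (compS_closed hz (Or.inl ⟨rfl, hne⟩)))
    · exact hup (Or.inr (compS_closed hz (Or.inl ⟨rfl, hne⟩)))
  rcases hz with hz | hz
  · -- z ∈ Sa; use bdry Sb = E
    have : topE z ∈ bdry Sb := by rw [hBb]; exact htopE
    have hx := mem_bdry_top.mp this
    exact hx (iff_of_false (fun hc => hdisj z hz hc) (fun hc => hup (Or.inr hc)))
  · have : topE z ∈ bdry Sa := by rw [hBa]; exact htopE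
    have hx := mem_bdry_top.mp this
    exact hx (iff_of_false (fun hc => hdisj z hc hz) (fun hc => hup (Or.inl hc)))
/-! ### Plane topology -/

lemma interior_sub {D D' : Set (Sym2 GridV)}
    (hsub : carrierOf D' ⊆ interiorOf D ∪ carrierOf D) :
    interiorOf D' ⊆ interiorOf D ∪ carrierOf D := by
  intro p hp
  by_contra hq
  have hpc : p ∉ carrierOf D := fun h => hq (Or.inr h)
  have hpi : p ∉ interiorOf D := fun h => hq (Or.inl h)
  set K := connectedComponentIn (carrierOf D)ᶜ p with hK
  have hKunb : ¬ Bornology.IsBounded K := by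
    intro hb
    exact hpi ⟨hpc, hb⟩
  have hKsub : K ⊆ (carrierOf D)ᶜ := connectedComponentIn_subset _ _
  have hKint : ∀ q ∈ K, q ∉ interiorOf D := by
    intro q hqK hqI
    have heq : connectedComponentIn (carrierOf D)ᶜ p = connectedComponentIn (carrierOf D)ᶜ q :=
      connectedComponentIn_eq hqK
    exact hKunb (by rw [hK, heq]; exact hqI.2)
  have hKD' : K ⊆ (carrierOf D')ᶜ := by
    intro q hqK hqD'
    rcases hsub hqD' with h | h
    · exact hKint q hqK h
    · exact hKsub hqK h
  have hpK : p ∈ K := mem_connectedComponentIn hpc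
  have hKcomp : K ⊆ connectedComponentIn (carrierOf D')ᶜ p :=
    (isPreconnected_connectedComponentIn).subset_connectedComponentIn hpK hKD'
  exact hKunb (hp.2.subset hKcomp)

lemma seg_sub_comp {F : Set (ℝ × ℝ)} {x y p : ℝ × ℝ}
    (hseg : segment ℝ x y ⊆ F) (hp : p ∈ segment ℝ x y) :
    segment ℝ x y ⊆ connectedComponentIn F p :=
  (convex_segment x y).isPreconnected.subset_connectedComponentIn hp hseg

lemma bounded_comp_of_mem {F : Set (ℝ × ℝ)} {p q : ℝ × ℝ}
    (hq : q ∈ connectedComponentIn F p)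
    (hb : Bornology.IsBounded (connectedComponentIn F p)) :
    Bornology.IsBounded (connectedComponentIn F q) := by
  rw [← connectedComponentIn_eq hq]
  exact hb

lemma finite_of_ctr_bounded {S : Set GridV} {K : Set (ℝ × ℝ)}
    (hK : Bornology.IsBounded K) (hmem : ∀ z ∈ S, ctr z ∈ K) : S.Finite := by
  obtain ⟨R, hR⟩ := hK.exists_norm_le
  set N : ℤ := ⌈R⌉ with hN
  have hbox : S ⊆ (Set.Icc (-N) N) ×ˢ (Set.Icc (-N) N) := by
    intro z hz
    have hnorm := hR _ (hmem z hz)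
    have h1 : |(z.1 : ℝ)| ≤ R := by
      have h := norm_fst_le (ctr z)
      rw [Real.norm_eq_abs] at h
      exact le_trans h hnorm
    have h2 : |(z.2 : ℝ)| ≤ R := by
      have h := norm_snd_le (ctr z)
      rw [Real.norm_eq_abs] at h
      exact le_trans h hnorm
    have hc1 : |z.1| ≤ N := by
      have : |(z.1 : ℝ)| ≤ (N : ℝ) := le_trans h1 (Int.le_ceil R)
      rw [← Int.cast_abs] at this
      exact_mod_cast this
    have hc2 : |z.2| ≤ N := by
      have : |(z.2 : ℝ)| ≤ (N : ℝ) := le_trans h2 (Int.le_ceil R)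
      rw [← Int.cast_abs] at this
      exact_mod_cast this
    obtain ⟨ha1, ha2⟩ := abs_le.mp hc1
    obtain ⟨hb1, hb2⟩ := abs_le.mp hc2
    exact ⟨⟨ha1, ha2⟩, ⟨hb1, hb2⟩⟩
  exact Set.Finite.subset (((Set.finite_Icc _ _).prod (Set.finite_Icc _ _))) hbox

lemma ctr_comp {E : Set (Sym2 GridV)} (hC : Canon E) {a : GridV} :
    ∀ z ∈ compS E a, ctr z ∈ connectedComponentIn (carrierOf E)ᶜ (ctr a) := by
  intro z hz
  induction hz with
  | refl => exact mem_connectedComponentIn (ctr_not_in_carrier hC a)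
  | @tail b z hprev hadj ih =>
    have hstep : ∀ u v : GridV, (segment ℝ (ctr u) (ctr v) ⊆ (carrierOf E)ᶜ) →
        ctr u ∈ connectedComponentIn (carrierOf E)ᶜ (ctr a) →
        ctr v ∈ connectedComponentIn (carrierOf E)ᶜ (ctr a) := by
      intro u v hseg hu
      have h1 : segment ℝ (ctr u) (ctr v) ⊆ connectedComponentIn (carrierOf E)ᶜ (ctr u) :=
        seg_sub_comp hseg (left_mem_segment ℝ _ _)
      have h2 : connectedComponentIn (carrierOf E)ᶜ (ctr a) =
          connectedComponentIn (carrierOf E)ᶜ (ctr u) := connectedComponentIn_eq hu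
      rw [h2]
      exact h1 (right_mem_segment ℝ _ _)
    rcases hadj with ⟨hv, ht⟩ | ⟨hv, ht⟩ | ⟨hv, ht⟩ | ⟨hv, ht⟩
    · refine hstep b z ?_ ih
      rw [hv]
      intro q hq
      exact segCtrV_avoid hC ht q hq
    · refine hstep b z ?_ ih
      rw [segment_symm, hv]
      intro q hq
      exact segCtrV_avoid hC ht q hq
    · refine hstep b z ?_ ih
      rw [hv]
      intro q hq
      exact segCtrH_avoid hC ht q hq
    · refine hstep b z ?_ ih
      rw [segment_symm, hv]
      intro q hq
      exact segCtrH_avoid hC ht q hq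
/-! ### Main argument -/

lemma main_case (CD CD' : GridCycle) {e : Sym2 GridV}
    (hΩ : interiorOf CD'.edgeSet ⊆ interiorOf CD.edgeSet ∪ carrierOf CD.edgeSet)
    (hcov' : inInterior CD'.edgeSet (edgeSeg e))
    {m : ℝ × ℝ} {a b : GridV}
    (hm_e : m ∈ edgeSeg e)
    (hm_seg : m ∈ segment ℝ (ctr b) (ctr a))
    (hseg : segment ℝ (ctr b) (ctr a) ⊆ (carrierOf CD'.edgeSet)ᶜ)
    (hNp : Np CD.edgeSet a ≠ Np CD.edgeSet b) : False := by
  have hm_not' : m ∉ carrierOf CD'.edgeSet := hseg hm_seg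
  have hm_int : m ∈ interiorOf CD'.edgeSet := by
    rcases hcov' hm_e with h | h
    · exact h
    · exact absurd h hm_not'
  have hbound' : Bornology.IsBounded (connectedComponentIn (carrierOf CD'.edgeSet)ᶜ m) :=
    hm_int.2
  have hsub := seg_sub_comp hseg hm_seg
  have hctr : ∀ c0 : ℝ × ℝ, c0 ∈ segment ℝ (ctr b) (ctr a) →
      c0 ∈ interiorOf CD'.edgeSet := by
    intro c0 hc0
    exact ⟨hseg hc0, bounded_comp_of_mem (hsub hc0) hbound'⟩
  have hA : ctr a ∈ interiorOf CD.edgeSet := by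
    rcases hΩ (hctr _ (right_mem_segment ℝ _ _)) with h | h
    · exact h
    · exact absurd h (ctr_not_in_carrier CD.canon_edgeSet a)
  have hB : ctr b ∈ interiorOf CD.edgeSet := by
    rcases hΩ (hctr _ (left_mem_segment ℝ _ _)) with h | h
    · exact h
    · exact absurd h (ctr_not_in_carrier CD.canon_edgeSet b)
  have hfa : (compS CD.edgeSet a).Finite :=
    finite_of_ctr_bounded hA.2 (fun z hz => ctr_comp CD.canon_edgeSet z hz)
  have hfb : (compS CD.edgeSet b).Finite :=
    finite_of_ctr_bounded hB.2 (fun z hz => ctr_comp CD.canon_edgeSet z hz)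
  exact discrete_jordan CD hNp hfa hfb

lemma key_subset (C₁ C₂ D D' : Set (Sym2 GridV)) (hD : IsCycle D) (hDsub : D ⊆ C₁ ∪ C₂)
    (hDcov : ∀ e ∈ C₁ ∪ C₂, e ∈ D ∨ inInterior D (edgeSeg e))
    (hD' : IsCycle D') (hD'sub : D' ⊆ C₁ ∪ C₂)
    (hD'cov : ∀ e ∈ C₁ ∪ C₂, e ∈ D' ∨ inInterior D' (edgeSeg e)) : D ⊆ D' := by
  obtain ⟨CD, rfl⟩ := hD
  obtain ⟨CD', rfl⟩ := hD'
  intro e heD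
  by_contra heD'
  have hcar : carrierOf CD'.edgeSet ⊆ interiorOf CD.edgeSet ∪ carrierOf CD.edgeSet := by
    intro q hq
    obtain ⟨e', he', hqe⟩ := mem_carrierOf.mp hq
    rcases hDcov e' (hD'sub he') with hmem | hmem
    · exact Or.inr (mem_carrierOf.mpr ⟨e', hmem, hqe⟩)
    · exact hmem hqe
  have hΩ := interior_sub hcar
  have hcov' : inInterior CD'.edgeSet (edgeSeg e) := by
    rcases hD'cov e (hDsub heD) with hmem | hmem
    · exact absurd hmem heD'
    · exact hmem
  obtain ⟨k, h, hcan | hcan⟩ := CD.canon_edgeSet e heD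
  · -- horizontal edge
    subst hcan
    have e3 : ((k, h - 1) : GridV) + (0, 1) = ((k, h) : GridV) := by
      rw [Prod.mk_add_mk]; exact gv_ext (by ring) (by ring)
    have e4 : topE ((k, h - 1) : GridV) = Hedge k h := by
      show Hedge k (h - 1 + 1) = _
      rw [show h - 1 + 1 = h from by ring]
    have hm_seg : ((((k : ℝ))), ((h : ℝ) - 1/2)) ∈
        segment ℝ (ctr ((k, h - 1) : GridV)) (ctr ((k, h) : GridV)) := by
      rw [← e3, ctr_up, mem_segV]
      refine ⟨rfl, ?_, ?_⟩
      · show ((h - 1 : ℤ) : ℝ) ≤ (h : ℝ) - 1/2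
        push_cast; linarith
      · show (h : ℝ) - 1/2 ≤ ((h - 1 : ℤ) : ℝ) + 1
        push_cast; linarith
    have hseg : segment ℝ (ctr ((k, h - 1) : GridV)) (ctr ((k, h) : GridV)) ⊆
        (carrierOf CD'.edgeSet)ᶜ := by
      intro q hq
      rw [← e3] at hq
      exact segCtrV_avoid CD'.canon_edgeSet (by rw [e4]; exact heD') q hq
    have hNp : Np CD.edgeSet ((k, h) : GridV) ≠ Np CD.edgeSet ((k, h - 1) : GridV) :=
      (CD.np_ne_H heD).symm
    exact main_case CD CD' hΩ hcov' (midH_mem k h) hm_seg hseg hNp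
  · -- vertical edge
    subst hcan
    have e3 : ((k - 1, h) : GridV) + (1, 0) = ((k, h) : GridV) := by
      rw [Prod.mk_add_mk]; exact gv_ext (by ring) (by ring)
    have e4 : rightE ((k - 1, h) : GridV) = Vedge k h := by
      show Vedge (k - 1 + 1) h = _
      rw [show k - 1 + 1 = k from by ring]
    have hm_seg : (((k : ℝ) - 1/2), (((h : ℝ)))) ∈
        segment ℝ (ctr ((k - 1, h) : GridV)) (ctr ((k, h) : GridV)) := by
      rw [← e3, ctr_right, mem_segH]
      refine ⟨rfl, ?_, ?_⟩
      · show ((k - 1 : ℤ) : ℝ) ≤ (k : ℝ) - 1/2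
        push_cast; linarith
      · show (k : ℝ) - 1/2 ≤ ((k - 1 : ℤ) : ℝ) + 1
        push_cast; linarith
    have hseg : segment ℝ (ctr ((k - 1, h) : GridV)) (ctr ((k, h) : GridV)) ⊆
        (carrierOf CD'.edgeSet)ᶜ := by
      intro q hq
      rw [← e3] at hq
      exact segCtrH_avoid CD'.canon_edgeSet (by rw [e4]; exact heD') q hq
    have hNp : Np CD.edgeSet ((k, h) : GridV) ≠ Np CD.edgeSet ((k - 1, h) : GridV) :=
      (CD.np_ne_V heD).symm
    exact main_case CD CD' hΩ hcov' (midV_mem k h) hm_seg hseg hNp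

/-- Let `C₁, C₂` be cycles of the full grid graph. If `D` and `D'` are
cycles consisting only of edges of `C₁` and `C₂` such that every edge of `C₁` and of
`C₂` belongs to `D` or is contained in the interior of `D`, and likewise for `D'`, then
`D = D'`. -/
theorem merged_cycle_unique (C₁ C₂ D D' : Set (Sym2 GridV))
    (h₁ : IsCycle C₁) (h₂ : IsCycle C₂)
    (hD : IsCycle D) (hDsub : D ⊆ C₁ ∪ C₂)
    (hDcov : ∀ e ∈ C₁ ∪ C₂, e ∈ D ∨ inInterior D (edgeSeg e))
    (hD' : IsCycle D') (hD'sub : D' ⊆ C₁ ∪ C₂)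
    (hD'cov : ∀ e ∈ C₁ ∪ C₂, e ∈ D' ∨ inInterior D' (edgeSeg e)) :
    D = D' := by
  exact Set.Subset.antisymm
    (key_subset C₁ C₂ D D' hD hDsub hDcov hD' hD'sub hD'cov)
    (key_subset C₁ C₂ D' D hD' hD'sub hD'cov hD hDsub hDcov)
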